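/- Let B(n,m) be the bi-moment matrix with B(n,0)=α^n, B(0,m)=β^m, B(n,m)=αβ(B(n,m-1)+B(n-1,m)) for n,m≥1, and L the bilinear form L(x^i ⊗ y^j) = B(i,j). Define P_n(x) = (x-α)(x-αβ)^(n-1), Q_m(y) = (y-β)(y-αβ)^(m-1) for n,m ≥ 1, P_0 = Q_0 = 1, Λ_0 = 1, Λ_n = (αβ)^(2n-1)(α+β-1) for n ≥ 1. Extend L to triples by L(x^i ⊗ z ⊗ y^j) where z ∈ {x-variable, y-variable} using L(x^i ⊗ x ⊗ y^j) = B(i+1, j). Then X(n,m) := L(P_n·x ⊗ Q_m) satisfies: X(0,0) = α·Λ_0, X(n,n) = αβ·Λ_n for n ≥ 1, X(n,n+1) = Λ_{n+1}, and X(n,m) = 0 otherwise. -/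

import Mathlib

open Polynomial

/-- The bilinear form determined by the bi-moment matrix `B`:
`L(x^i ⊗ y^j) = B i j`, extended bilinearly. -/
def Lform (B : ℕ → ℕ → ℝ) (P Q : Polynomial ℝ) : ℝ :=
  ∑ i ∈ P.support, ∑ j ∈ Q.support, P.coeff i * Q.coeff j * B i j

/-- The bilinear form as a bundled bilinear map. -/
noncomputable def LB (B : ℕ → ℕ → ℝ) : Polynomial ℝ →ₗ[ℝ] Polynomial ℝ →ₗ[ℝ] ℝ :=
  Polynomial.lsum fun i => LinearMap.smulRight (LinearMap.id : ℝ →ₗ[ℝ] ℝ)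
    (Polynomial.lsum fun j => LinearMap.smulRight (LinearMap.id : ℝ →ₗ[ℝ] ℝ) (B i j))

lemma Lform_eq_LB (B : ℕ → ℕ → ℝ) (P Q : Polynomial ℝ) :
    Lform B P Q = LB B P Q := by
  simp [Lform, LB, Polynomial.lsum_apply, Polynomial.sum, LinearMap.sum_apply,
    Finset.mul_sum, mul_assoc]

lemma LB_pow (B : ℕ → ℕ → ℝ) (a b : ℕ) : LB B (X ^ a) (X ^ b) = B a b := by
  simp [LB, Polynomial.lsum_apply, Polynomial.X_pow_eq_monomial,
    Polynomial.sum_monomial_index]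

lemma LB_monomial (B : ℕ → ℕ → ℝ) (n m : ℕ) (a b : ℝ) :
    LB B (monomial n a) (monomial m b) = a * b * B n m := by
  simp [LB, Polynomial.lsum_apply, Polynomial.sum_monomial_index]
  ring

lemma LB_key {α β : ℝ} {B : ℕ → ℕ → ℝ}
    (hB3 : ∀ n m, B (n + 1) (m + 1) = α * β * (B (n + 1) m + B n (m + 1))) :
    ∀ f g : Polynomial ℝ,
      LB B (X * f) (X * g) = α * β * (LB B (X * f) g + LB B f (X * g)) := by
  intro f
  induction f using Polynomial.induction_on' with
  | add p q hp hq =>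
    intro g
    rw [mul_add]
    simp only [map_add, LinearMap.add_apply, hp g, hq g]
    ring
  | monomial n a =>
    intro g
    induction g using Polynomial.induction_on' with
    | add p q hp hq =>
      rw [mul_add]
      simp only [map_add, hp, hq]
      ring
    | monomial m b =>
      rw [X_mul_monomial, X_mul_monomial]
      simp only [LB_monomial, hB3 n m]
      ring

lemma LB_L3 {α β : ℝ} {B : ℕ → ℕ → ℝ}
    (hB3 : ∀ n m, B (n + 1) (m + 1) = α * β * (B (n + 1) m + B n (m + 1)))
    (f g : Polynomial ℝ) :
    LB B (X * f) ((X - C (α * β)) * g) = α * β * LB B f (X * g) := by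
  have hsub : (X - C (α * β)) * g = X * g - (α * β) • g := by
    rw [smul_eq_C_mul]; ring
  rw [hsub, map_sub, map_smul, smul_eq_mul, LB_key hB3 f g]
  ring

lemma LB_L4 {α β : ℝ} {B : ℕ → ℕ → ℝ}
    (hB3 : ∀ n m, B (n + 1) (m + 1) = α * β * (B (n + 1) m + B n (m + 1)))
    (f g : Polynomial ℝ) :
    LB B ((X - C (α * β)) * f) (X * g) = α * β * LB B (X * f) g := by
  have hsub : (X - C (α * β)) * f = X * f - (α * β) • f := by
    rw [smul_eq_C_mul]; ring
  rw [hsub, map_sub, map_smul, LinearMap.sub_apply, LinearMap.smul_apply,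
    smul_eq_mul, LB_key hB3 f g]
  ring

lemma LB_peel {α β : ℝ} {B : ℕ → ℕ → ℝ}
    (hB3 : ∀ n m, B (n + 1) (m + 1) = α * β * (B (n + 1) m + B n (m + 1))) :
    ∀ (k : ℕ) (f g : Polynomial ℝ),
      LB B (X * ((X - C (α * β)) ^ k * f)) ((X - C (α * β)) ^ k * g)
        = (α * β) ^ (2 * k) * LB B (X * f) g := by
  intro k
  induction k with
  | zero => intro f g; simp
  | succ k ih =>
    intro f g
    have e1 : (X - C (α * β)) ^ (k + 1) * g
        = (X - C (α * β)) * ((X - C (α * β)) ^ k * g) := by ring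
    have e2 : X * ((X - C (α * β)) ^ (k + 1) * f)
        = X * ((X - C (α * β)) ^ (k + 1) * f) := rfl
    rw [e1, LB_L3 hB3]
    have e3 : (X - C (α * β)) ^ (k + 1) * f
        = (X - C (α * β)) * ((X - C (α * β)) ^ k * f) := by ring
    rw [e3, LB_L4 hB3, ih f g]
    ring

lemma LB_eval_right {α : ℝ} {B : ℕ → ℕ → ℝ}
    (hB1 : ∀ n, B n 0 = α ^ n) (P : Polynomial ℝ) :
    LB B P 1 = P.eval α := by
  induction P using Polynomial.induction_on' with
  | add p q hp hq => simp [map_add, LinearMap.add_apply, hp, hq]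
  | monomial n a =>
    have h1 : (1 : Polynomial ℝ) = monomial 0 1 := by simp
    rw [h1, LB_monomial]
    simp [hB1]

lemma LB_eval_left {β : ℝ} {B : ℕ → ℕ → ℝ}
    (hB2 : ∀ m, B 0 m = β ^ m) (Q : Polynomial ℝ) :
    LB B 1 Q = Q.eval β := by
  induction Q using Polynomial.induction_on' with
  | add p q hp hq => simp [map_add, hp, hq]
  | monomial n a =>
    have h1 : (1 : Polynomial ℝ) = monomial 0 1 := by simp
    rw [h1, LB_monomial]
    simp [hB2, mul_comm]

theorem stmt_13 (α β : ℝ) (B : ℕ → ℕ → ℝ)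
    (hB1 : ∀ n, B n 0 = α ^ n) (hB2 : ∀ m, B 0 m = β ^ m)
    (hB3 : ∀ n m, B (n + 1) (m + 1) = α * β * (B (n + 1) m + B n (m + 1)))
    (P Q : ℕ → Polynomial ℝ)
    (hP0 : P 0 = 1) (hP : ∀ n, 1 ≤ n → P n = (X - C α) * (X - C (α * β)) ^ (n - 1))
    (hQ0 : Q 0 = 1) (hQ : ∀ m, 1 ≤ m → Q m = (X - C β) * (X - C (α * β)) ^ (m - 1))
    (Λ : ℕ → ℝ) (hΛ0 : Λ 0 = 1)
    (hΛ : ∀ n, 1 ≤ n → Λ n = (α * β) ^ (2 * n - 1) * (α + β - 1))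
    (Xm : ℕ → ℕ → ℝ) (hX : ∀ n m, Xm n m = Lform B (P n * X) (Q m)) :
    Xm 0 0 = α * Λ 0 ∧
      (∀ n, 1 ≤ n → Xm n n = α * β * Λ n) ∧
      (∀ n, Xm n (n + 1) = Λ (n + 1)) ∧
      (∀ n m, m ≠ n → m ≠ n + 1 → Xm n m = 0) := by
  -- basic B values
  have hB10 : B 1 0 = α := by simpa using hB1 1
  have hB20 : B 2 0 = α ^ 2 := hB1 2
  have hB01 : B 0 1 = β := by simpa using hB2 1
  have hB02 : B 0 2 = β ^ 2 := hB2 2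
  have hB11 : B 1 1 = α * β * (α + β) := by
    have := hB3 0 0; rw [hB10, hB01] at this; linarith
  have hB21 : B 2 1 = α * β * (α ^ 2 + α * β * (α + β)) := by
    have := hB3 1 0; rw [hB20, hB11] at this; linarith
  have hB12 : B 1 2 = α * β * (α * β * (α + β) + β ^ 2) := by
    have := hB3 0 1; rw [hB11, hB02] at this; linarith
  -- base case computations
  have hW0 : LB B (X * (X - C α)) (X - C β) = (α * β) ^ 2 * (α + β - 1) := by
    have e1 : X * (X - C α) = monomial 2 (1 : ℝ) - monomial 1 α := by
      simp only [← C_mul_X_pow_eq_monomial, C_1]; ring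
    have e2 : X - C β = monomial 1 (1 : ℝ) - monomial 0 β := by
      simp only [← C_mul_X_pow_eq_monomial, C_1]; ring
    rw [e1, e2]
    simp only [map_sub, LinearMap.sub_apply, LB_monomial]
    rw [hB21, hB20, hB11, hB10]; ring
  have hW1 : LB B (X * (X - C α)) ((X - C (α * β)) * (X - C β))
      = (α * β) ^ 3 * (α + β - 1) := by
    rw [LB_L3 hB3]
    have e1 : (X : Polynomial ℝ) - C α = monomial 1 (1 : ℝ) - monomial 0 α := by
      simp only [← C_mul_X_pow_eq_monomial, C_1]; ring
    have e2 : X * (X - C β) = monomial 2 (1 : ℝ) - monomial 1 β := by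
      simp only [← C_mul_X_pow_eq_monomial, C_1]; ring
    rw [e1, e2]
    simp only [map_sub, LinearMap.sub_apply, LB_monomial]
    rw [hB12, hB11, hB02, hB01]; ring
  have hX01 : LB B X (X - C β) = α * β * (α + β - 1) := by
    have e2 : X - C β = monomial 1 (1 : ℝ) - monomial 0 β := by
      simp only [← C_mul_X_pow_eq_monomial, C_1]; ring
    rw [e2, ← monomial_one_one_eq_X]
    simp only [map_sub, LB_monomial]
    rw [hB11, hB10]; ring
  refine ⟨?_, ?_, ?_, ?_⟩
  · -- Xm 0 0
    rw [hX, Lform_eq_LB, hP0, hQ0, one_mul, LB_eval_right hB1, hΛ0]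
    simp
  · -- diagonal
    intro n hn
    obtain ⟨k, rfl⟩ : ∃ k, n = k + 1 := ⟨n - 1, by omega⟩
    rw [hX, Lform_eq_LB]
    have eP : P (k + 1) * X = X * ((X - C (α * β)) ^ k * (X - C α)) := by
      rw [hP (k + 1) (by omega)]; simp only [Nat.add_sub_cancel]; ring
    have eQ : Q (k + 1) = (X - C (α * β)) ^ k * (X - C β) := by
      rw [hQ (k + 1) (by omega)]; simp only [Nat.add_sub_cancel]; ring
    rw [eP, eQ, LB_peel hB3, hW0, hΛ (k + 1) (by omega),
      show 2 * (k + 1) - 1 = 2 * k + 1 from by omega]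
    ring
  · -- superdiagonal
    intro n
    rcases n with _ | k
    · rw [hX, Lform_eq_LB, hP0, one_mul]
      have eQ : Q 1 = X - C β := by rw [hQ 1 le_rfl]; simp
      rw [eQ, hX01, hΛ 1 le_rfl]
      norm_num
    · rw [hX, Lform_eq_LB]
      have eP : P (k + 1) * X = X * ((X - C (α * β)) ^ k * (X - C α)) := by
        rw [hP (k + 1) (by omega)]; simp only [Nat.add_sub_cancel]; ring
      have eQ : Q (k + 1 + 1)
          = (X - C (α * β)) ^ k * ((X - C (α * β)) * (X - C β)) := by
        rw [hQ (k + 2) (by omega), show k + 2 - 1 = k + 1 from by omega]; ring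
      rw [eP, eQ, LB_peel hB3, hW1, hΛ (k + 2) (by omega),
        show 2 * (k + 2) - 1 = 2 * k + 3 from by omega]
      ring
  · -- vanishing
    intro n m h1 h2
    rw [hX, Lform_eq_LB]
    rcases Nat.eq_zero_or_pos m with hm | hm
    · -- m = 0, n ≥ 1
      subst hm
      obtain ⟨k, rfl⟩ : ∃ k, n = k + 1 := ⟨n - 1, by omega⟩
      rw [hQ0, LB_eval_right hB1, hP (k + 1) (by omega)]
      simp
    rcases Nat.eq_zero_or_pos n with hn | hn
    · -- n = 0, m ≥ 2
      subst hn
      obtain ⟨i, rfl⟩ : ∃ i, m = i + 2 := ⟨m - 2, by omega⟩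
      rw [hP0, one_mul]
      have eQ : Q (i + 2)
          = (X - C (α * β)) * ((X - C (α * β)) ^ i * (X - C β)) := by
        rw [hQ (i + 2) (by omega), show i + 2 - 1 = i + 1 from by omega]; ring
      rw [show (X : Polynomial ℝ) = X * 1 from (mul_one X).symm, eQ, LB_L3 hB3,
        LB_eval_left hB2]
      simp
    obtain ⟨k, rfl⟩ : ∃ k, n = k + 1 := ⟨n - 1, by omega⟩
    rcases lt_or_ge m (k + 1) with hlt | hge
    · -- below diagonal : 1 ≤ m < n
      obtain ⟨e, rfl⟩ : ∃ e, m = e + 1 := ⟨m - 1, by omega⟩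
      obtain ⟨d, hd⟩ : ∃ d, k = e + 1 + d := ⟨k - e - 1, by omega⟩
      subst hd
      have eP : P (e + 1 + d + 1) * X
          = X * ((X - C (α * β)) ^ e * ((X - C (α * β)) ^ (d + 1) * (X - C α))) := by
        rw [hP (e + 1 + d + 1) (by omega), Nat.add_sub_cancel]; ring
      have eQ : Q (e + 1) = (X - C (α * β)) ^ e * (X - C β) := by
        rw [hQ (e + 1) (by omega), Nat.add_sub_cancel]; ring
      rw [eP, eQ, LB_peel hB3]
      have esub : (X : Polynomial ℝ) - C β = X * 1 - β • 1 := by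
        rw [smul_eq_C_mul]; ring
      rw [esub, map_sub, map_smul, smul_eq_mul]
      have hz1 : LB B (X * ((X - C (α * β)) ^ (d + 1) * (X - C α))) 1 = 0 := by
        rw [LB_eval_right hB1]; simp
      have eF : X * ((X - C (α * β)) ^ (d + 1) * (X - C α))
          = (X - C (α * β)) * (X * ((X - C (α * β)) ^ d * (X - C α))) := by ring
      have hz2 : LB B (X * ((X - C (α * β)) ^ (d + 1) * (X - C α))) (X * 1) = 0 := by
        rw [eF, LB_L4 hB3, LB_eval_right hB1]; simp
      rw [hz1, hz2]; ring
    · -- above: m ≥ n + 2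
      obtain ⟨i, rfl⟩ : ∃ i, m = k + 3 + i := ⟨m - (k + 3), by omega⟩
      have eP : P (k + 1) * X = X * ((X - C (α * β)) ^ k * (X - C α)) := by
        rw [hP (k + 1) (by omega)]; simp only [Nat.add_sub_cancel]; ring
      have eQ : Q (k + 3 + i)
          = (X - C (α * β)) ^ k
            * ((X - C (α * β)) * ((X - C (α * β)) * ((X - C (α * β)) ^ i * (X - C β)))) := by
        rw [hQ (k + 3 + i) (by omega), show k + 3 + i - 1 = k + 2 + i from by omega]
        ring
      rw [eP, eQ, LB_peel hB3, LB_L3 hB3,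
        show (X : Polynomial ℝ) - C α = X * 1 - α • 1 from by rw [smul_eq_C_mul]; ring,
        map_sub, map_smul, LinearMap.sub_apply, LinearMap.smul_apply, smul_eq_mul]
      have eG : X * ((X - C (α * β)) * ((X - C (α * β)) ^ i * (X - C β)))
          = (X - C (α * β)) * (X * ((X - C (α * β)) ^ i * (X - C β))) := by ring
      have hz2 : LB B (X * 1)
          (X * ((X - C (α * β)) * ((X - C (α * β)) ^ i * (X - C β)))) = 0 := by
        rw [eG, LB_L3 hB3, LB_eval_left hB2]; simp
      have hz3 : LB B 1
          (X * ((X - C (α * β)) * ((X - C (α * β)) ^ i * (X - C β)))) = 0 := by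
        rw [LB_eval_left hB2]; simp
      rw [hz2, hz3]; ring
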